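/- arXiv:1706.00287 — 4 statements merged into one kernel-verified Lean document; each statement's English description precedes it below -/
import Mathlib

section
/- Jacobi's formula along a fluid flow: for all (t,l) ∈ ℝ × ℝⁿ, the Jacobian determinant of the flow map satisfies ∂_t det(D_l g(t,l)) = (div u)(t, g(t,l)) · det(D_l g(t,l)), where div u = Σⱼ ∂_{xⱼ} uⱼ. -/
set_option maxHeartbeats 2000000

open Matrix

variable {n : ℕ}

noncomputable def detCM (n : ℕ) : ContinuousMultilinearMap ℝ (fun _ : Fin n => (Fin n → ℝ)) ℝ :=
  (Matrix.detRowAlternating : (Fin n → ℝ) [⋀^Fin n]→ₗ[ℝ] ℝ).toMultilinearMap.mkContinuous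
    ((Nat.factorial n : ℕ) : ℝ) (by
      intro m
      have h1 : |(Matrix.of m).det| ≤ ∑ σ : Equiv.Perm (Fin n), ∏ i, ‖m i‖ := by
        rw [Matrix.det_apply]
        refine (Finset.abs_sum_le_sum_abs _ _).trans (Finset.sum_le_sum fun σ _ => ?_)
        have : |Equiv.Perm.sign σ • ∏ i, Matrix.of m (σ i) i| = |∏ i, m (σ i) i| := by
          rcases Int.units_eq_one_or (Equiv.Perm.sign σ) with h | h <;> simp [h]
        rw [this, Finset.abs_prod, ← Equiv.prod_comp σ (fun i => ‖m i‖)]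
        exact Finset.prod_le_prod (fun _ _ => abs_nonneg _)
          (fun i _ => norm_le_pi_norm (m (σ i)) i)
      have h2 : |(Matrix.of m).det| ≤ ((Nat.factorial n : ℕ) : ℝ) * ∏ i, ‖m i‖ := by
        simpa [Finset.sum_const, Fintype.card_perm] using h1
      exact h2)

lemma detCM_apply (m : Fin n → Fin n → ℝ) : detCM n m = (Matrix.of m).det := by
  simp [detCM, MultilinearMap.coe_mkContinuous]
  rfl

lemma sum_det_updateRow (N A : Matrix (Fin n) (Fin n) ℝ) :
    ∑ i, (A.updateRow i ((N * A) i)).det = N.trace * A.det := by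
  have h : ∀ i : Fin n, (N * A) i = ∑ k, N i k • A k := by
    intro i; funext j
    simp [Matrix.mul_apply, Finset.sum_apply]
  rw [show N.trace * A.det = ∑ i, N i i * A.det by
    rw [Matrix.trace, ← Finset.sum_mul]; rfl]
  refine Finset.sum_congr rfl fun i _ => ?_
  rw [h i, Matrix.det_updateRow_sum, smul_eq_mul]

lemma hasDerivAt_det {B : ℝ → (Fin n → Fin n → ℝ)} {B' : Fin n → Fin n → ℝ} {t : ℝ}
    (h : HasDerivAt B B' t) :
    HasDerivAt (fun s => (Matrix.of (B s)).det)
      (∑ i, ((Matrix.of (B t)).updateRow i (B' i)).det) t := by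
  have h1 := ((detCM n).hasFDerivAt (x := B t)).comp_hasDerivAt t h
  have h2 : (detCM n).linearDeriv (B t) B' = ∑ i, ((Matrix.of (B t)).updateRow i (B' i)).det := by
    rw [ContinuousMultilinearMap.linearDeriv_apply]
    refine Finset.sum_congr rfl fun i _ => ?_
    exact detCM_apply _
  have h3 : (fun s => (Matrix.of (B s)).det) = ⇑(detCM n) ∘ B :=
    funext fun s => (detCM_apply _).symm
  rw [h3]
  simpa [detCM_apply, h2] using h1

noncomputable def matL : ((Fin n → ℝ) →L[ℝ] (Fin n → ℝ)) →L[ℝ] (Fin n → Fin n → ℝ) :=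
  LinearMap.toContinuousLinearMap
    { toFun := fun T => LinearMap.toMatrix' (T : (Fin n → ℝ) →ₗ[ℝ] (Fin n → ℝ))
      map_add' := fun a b => by simp; rfl
      map_smul' := fun c a => by simp; rfl }

lemma matL_apply (T : (Fin n → ℝ) →L[ℝ] (Fin n → ℝ)) :
    matL T = LinearMap.toMatrix' (T : (Fin n → ℝ) →ₗ[ℝ] (Fin n → ℝ)) := rfl

lemma det_matL (T : (Fin n → ℝ) →L[ℝ] (Fin n → ℝ)) :
    (Matrix.of (matL T)).det = T.det := by
  rw [matL_apply]
  exact LinearMap.det_toMatrix' _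

lemma key_det_deriv {A : ℝ → ((Fin n → ℝ) →L[ℝ] (Fin n → ℝ))}
    {M : (Fin n → ℝ) →L[ℝ] (Fin n → ℝ)} {t : ℝ}
    (h : HasDerivAt A (M.comp (A t)) t) :
    HasDerivAt (fun s => (A s).det) ((∑ j, M (Pi.single j 1) j) * (A t).det) t := by
  have hB : HasDerivAt (fun s => matL (A s)) (matL (M.comp (A t))) t :=
    (matL.hasFDerivAt).comp_hasDerivAt t h
  have h1 := hasDerivAt_det hB
  have h2 : matL (M.comp (A t)) = (Matrix.of (matL M) * Matrix.of (matL (A t)) :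
      Matrix (Fin n) (Fin n) ℝ) := by
    rw [matL_apply, matL_apply, matL_apply, ContinuousLinearMap.toLinearMap_comp,
      LinearMap.toMatrix'_comp]
    rfl
  rw [h2] at h1
  have h3 := sum_det_updateRow (Matrix.of (matL M)) (Matrix.of (matL (A t)))
  have h4 : (Matrix.of (matL M)).trace = ∑ j, M (Pi.single j 1) j := by
    rw [Matrix.trace]
    refine Finset.sum_congr rfl fun j _ => ?_
    simp only [Matrix.diag, matL_apply, LinearMap.toMatrix'_apply, Matrix.of_apply]
    change LinearMap.toMatrix' (M : (Fin n → ℝ) →ₗ[ℝ] (Fin n → ℝ)) j j = _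
    rw [LinearMap.toMatrix'_apply, ContinuousLinearMap.coe_coe]
  have h5 : ∀ s, (Matrix.of (matL (A s))).det = (A s).det := fun s => det_matL _
  simp only [h5] at h1
  rw [show (∑ i, ((Matrix.of (matL (A t))).updateRow i
      ((Matrix.of (matL M) * Matrix.of (matL (A t))) i)).det) = _ from h3, h4, det_matL] at h1
  exact h1

/-- **Jacobi's formula along a fluid flow.**
If `g : ℝ × ℝⁿ → ℝⁿ` is continuously differentiable jointly in `(t, l)`, its spatial
differential `D_l g (t, l)` is continuously differentiable in `(t, l)`, `u` is a
continuously differentiable time-dependent velocity field, and `g` is a flow map of `u`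
(i.e. `∂_t g (t, l) = u (t, g (t, l))`), then the Jacobian determinant of the flow map
satisfies `∂_t det (D_l g (t, l)) = (div u) (t, g (t, l)) * det (D_l g (t, l))`,
where `div u = Σ_j ∂_{x_j} u_j`. -/
theorem jacobi_formula_along_flow
    (n : ℕ)
    (g : ℝ × (Fin n → ℝ) → (Fin n → ℝ))
    (u : ℝ × (Fin n → ℝ) → (Fin n → ℝ))
    (hg : ContDiff ℝ 1 g)
    (hDg : ContDiff ℝ 1 (fun p : ℝ × (Fin n → ℝ) =>
      fderiv ℝ (fun l => g (p.1, l)) p.2))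
    (hu : ContDiff ℝ 1 u)
    (hflow : ∀ t l, deriv (fun s => g (s, l)) t = u (t, g (t, l))) :
    ∀ (t : ℝ) (l : Fin n → ℝ),
      deriv (fun s => (fderiv ℝ (fun l' => g (s, l')) l).det) t
        = (∑ j, fderiv ℝ (fun x => u (t, x) j) (g (t, l)) (Pi.single j 1))
            * (fderiv ℝ (fun l' => g (t, l')) l).det := by
  intro t l
  have hgdiff : Differentiable ℝ g := hg.differentiable one_ne_zero
  set v : ℝ × (Fin n → ℝ) → (Fin n → ℝ) := fun p => u (p.1, g p) with hv_def
  have hv : ContDiff ℝ 1 v := hu.comp (contDiff_fst.prodMk hg)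
  set Dl : ℝ × (Fin n → ℝ) → ((Fin n → ℝ) →L[ℝ] (Fin n → ℝ)) :=
    fun p => fderiv ℝ (fun l => g (p.1, l)) p.2 with hDl_def
  have hDl : ContDiff ℝ 1 Dl := hDg
  set fst' := ContinuousLinearMap.fst ℝ ℝ (Fin n → ℝ) with hfst'
  set snd' := ContinuousLinearMap.snd ℝ ℝ (Fin n → ℝ) with hsnd'
  set Φ : ℝ × (Fin n → ℝ) → (ℝ × (Fin n → ℝ) →L[ℝ] (Fin n → ℝ)) :=
    fun p => fst'.smulRight (v p) + (Dl p).comp snd' with hΦ_def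
  have hpart1 : ∀ p : ℝ × (Fin n → ℝ), v p = fderiv ℝ g p ((1:ℝ), (0:Fin n → ℝ)) := by
    rintro ⟨a, b⟩
    have hc : HasDerivAt (fun s => g (s, b))
        (fderiv ℝ g (a, b) ((1:ℝ), (0:Fin n → ℝ))) a := by
      have := (hgdiff (a, b)).hasFDerivAt.comp_hasDerivAt a
        (hasFDerivAt_prodMk_left a b).hasDerivAt
      simpa [Function.comp_def] using this
    have h2 := hflow a b
    rw [hc.deriv] at h2
    exact h2.symm
  have hpart2 : ∀ p : ℝ × (Fin n → ℝ),
      Dl p = (fderiv ℝ g p).comp (ContinuousLinearMap.inr ℝ ℝ (Fin n → ℝ)) := by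
    rintro ⟨a, b⟩
    have hc : HasFDerivAt (fun l' => g (a, l'))
        ((fderiv ℝ g (a, b)).comp (ContinuousLinearMap.inr ℝ ℝ (Fin n → ℝ))) b := by
      have := (hgdiff (a, b)).hasFDerivAt.comp b (hasFDerivAt_prodMk_right a b)
      simpa [Function.comp_def] using this
    exact hc.fderiv
  have hgd : ∀ p : ℝ × (Fin n → ℝ), HasFDerivAt g (Φ p) p := by
    intro p
    have hΦeq : Φ p = fderiv ℝ g p := by
      refine ContinuousLinearMap.ext fun x => ?_
      obtain ⟨x1, x2⟩ := x
      have hx : ((x1 : ℝ), (x2 : Fin n → ℝ))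
          = x1 • ((1:ℝ), (0:Fin n → ℝ)) + ((0:ℝ), x2) := by
        simp [Prod.ext_iff]
      simp only [hΦ_def, ContinuousLinearMap.add_apply, ContinuousLinearMap.smulRight_apply,
        ContinuousLinearMap.coe_comp', Function.comp_apply, hpart1 p, hpart2 p]
      rw [show fderiv ℝ g p (x1, x2)
          = fderiv ℝ g p (x1 • ((1:ℝ), (0:Fin n → ℝ)) + ((0:ℝ), x2)) by rw [← hx]]
      rw [map_add, _root_.map_smul]
      rfl
    rw [hΦeq]
    exact (hgdiff p).hasFDerivAt
  have hΦC1 : ContDiff ℝ 1 Φ := by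
    refine ContDiff.add ?_ (hDl.clm_comp contDiff_const)
    exact (ContinuousLinearMap.smulRightL ℝ (ℝ × (Fin n → ℝ)) (Fin n → ℝ) fst').contDiff.comp hv
  set f'' := fderiv ℝ Φ (t, l) with hf''
  have hΦd : HasFDerivAt Φ f'' (t, l) := (hΦC1.differentiable one_ne_zero (t, l)).hasFDerivAt
  have hsymm : ∀ w z : ℝ × (Fin n → ℝ), f'' w z = f'' z w :=
    second_derivative_symmetric_of_eventually_of_real
      (Filter.Eventually.of_forall hgd) hΦd
  set A : ℝ → ((Fin n → ℝ) →L[ℝ] (Fin n → ℝ)) := fun s => Dl (s, l) with hA_def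
  set K : ((ℝ × (Fin n → ℝ)) →L[ℝ] (Fin n → ℝ)) →L[ℝ] ((Fin n → ℝ) →L[ℝ] (Fin n → ℝ)) :=
    (ContinuousLinearMap.compL ℝ (Fin n → ℝ) (ℝ × (Fin n → ℝ)) (Fin n → ℝ)).flip
      (ContinuousLinearMap.inr ℝ ℝ (Fin n → ℝ)) with hK
  have hDlK : Dl = fun p => K (Φ p) := by
    funext p
    ext b
    simp [hK, hΦ_def, hfst', hsnd', ContinuousLinearMap.compL_apply]
  have hDld : HasFDerivAt Dl (K.comp f'') (t, l) := by
    rw [hDlK]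
    exact K.hasFDerivAt.comp (t, l) hΦd
  have hA : HasDerivAt A ((K.comp f'') ((1:ℝ), (0:Fin n → ℝ))) t := by
    have := hDld.comp_hasDerivAt t (hasFDerivAt_prodMk_left t l).hasDerivAt
    simpa [Function.comp_def] using this
  set ev : ((ℝ × (Fin n → ℝ)) →L[ℝ] (Fin n → ℝ)) →L[ℝ] (Fin n → ℝ) :=
    ContinuousLinearMap.apply ℝ (Fin n → ℝ) ((1:ℝ), (0:Fin n → ℝ)) with hev
  have hvK : v = fun p => ev (Φ p) := by
    funext p
    simp [hev, hΦ_def, hfst', hsnd']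
  have hvd : HasFDerivAt v (ev.comp f'') (t, l) := by
    rw [hvK]
    exact ev.hasFDerivAt.comp (t, l) hΦd
  have hvl : HasFDerivAt (fun l' => v (t, l'))
      ((ev.comp f'').comp (ContinuousLinearMap.inr ℝ ℝ (Fin n → ℝ))) l := by
    have := hvd.comp l (hasFDerivAt_prodMk_right t l)
    simpa [Function.comp_def] using this
  set M := fderiv ℝ (fun x => u (t, x)) (g (t, l)) with hM
  have hudiff : Differentiable ℝ (fun x : Fin n → ℝ => u (t, x)) := by
    have := (hu.comp ((contDiff_const (c := t)).prodMk contDiff_id)).differentiable one_ne_zero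
    simpa [Function.comp_def] using this
  have hw : HasFDerivAt (fun x : Fin n → ℝ => u (t, x)) M (g (t, l)) :=
    (hudiff (g (t, l))).hasFDerivAt
  have hgl : HasFDerivAt (fun l' => g (t, l')) (A t) l := by
    have hd : DifferentiableAt ℝ (fun l' => g (t, l')) l := by
      have := (hgdiff (t, l)).comp l ((differentiableAt_const t).prodMk differentiableAt_id)
      simpa [Function.comp_def] using this
    exact hd.hasFDerivAt
  have hcomp : HasFDerivAt (fun l' => v (t, l')) (M.comp (A t)) l := by
    have := hw.comp l hgl; exact this
  have huniq : (ev.comp f'').comp (ContinuousLinearMap.inr ℝ ℝ (Fin n → ℝ)) = M.comp (A t) :=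
    hvl.unique hcomp
  have hA' : HasDerivAt A (M.comp (A t)) t := by
    have heq : (K.comp f'') ((1:ℝ), (0:Fin n → ℝ)) = M.comp (A t) := by
      rw [← huniq]
      ext b
      have h1 : (K.comp f'') ((1:ℝ), (0:Fin n → ℝ)) b
          = f'' ((1:ℝ), (0:Fin n → ℝ)) ((0:ℝ), b) := by
        simp [hK, ContinuousLinearMap.compL_apply]
      have h2 : ((ev.comp f'').comp (ContinuousLinearMap.inr ℝ ℝ (Fin n → ℝ))) b
          = f'' ((0:ℝ), b) ((1:ℝ), (0:Fin n → ℝ)) := by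
        rw [ContinuousLinearMap.comp_apply, ContinuousLinearMap.comp_apply, hev,
          ContinuousLinearMap.apply_apply, ContinuousLinearMap.inr_apply]
      rw [h1, h2, hsymm]
    rw [← heq]
    exact hA
  have hdet := key_det_deriv hA'
  have hAt : fderiv ℝ (fun l' => g (t, l')) l = A t := rfl
  have hfun : (fun s => (fderiv ℝ (fun l' => g (s, l')) l).det) = fun s => (A s).det := rfl
  rw [hfun, hdet.deriv, hAt]
  congr 1
  refine Finset.sum_congr rfl fun j _ => ?_
  have hj : HasFDerivAt (fun x : Fin n → ℝ => u (t, x) j)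
      ((ContinuousLinearMap.proj j).comp M) (g (t, l)) := by
    have := (ContinuousLinearMap.proj (R := ℝ) (φ := fun _ : Fin n => ℝ) j).hasFDerivAt.comp
      (g (t, l)) hw
    simpa [Function.comp_def] using this
  rw [hj.fderiv]
  rfl
end

section
/- The advected density satisfies the continuity equation: if ρ : ℝ × ℝⁿ → ℝ is continuously differentiable and satisfies the push-forward relation ρ(t, g(t,l)) · det(D_l g(t,l)) = ρ₀(l) for all (t,l), where ρ₀ : ℝⁿ → ℝ, and for each t the map l ↦ g(t,l) is a bijection of ℝⁿ, then ∂_t ρ(t,x) + div(ρ u)(t,x) = 0 for all (t,x) ∈ ℝ × ℝⁿ. -/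
open Matrix Finset ContinuousLinearMap

lemma aux_sum_det_updateRow {N : ℕ} (m b : Matrix (Fin N) (Fin N) ℝ) :
    ∑ i, (m.updateRow i ((b * m) i)).det = b.trace * m.det := by
  have h : ∀ i : Fin N, (b * m) i = ∑ k, b i k • m k := by
    intro i; funext j
    simp [Matrix.mul_apply, Finset.sum_apply]
  calc ∑ i, (m.updateRow i ((b * m) i)).det
      = ∑ i, b i i • m.det := by
        refine Finset.sum_congr rfl fun i _ => ?_
        rw [h i, Matrix.det_updateRow_sum]
    _ = b.trace * m.det := by
        rw [Matrix.trace, Finset.sum_mul]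
        simp [Matrix.diag, smul_eq_mul]

lemma aux_swap {N : ℕ} (m m' : Matrix (Fin N) (Fin N) ℝ) :
    ∑ σ : Equiv.Perm (Fin N), ((Equiv.Perm.sign σ : ℤ) : ℝ) *
      ∑ i, (∏ j ∈ Finset.univ.erase i, m (σ j) j) * m' (σ i) i
    = ∑ i, (m.updateRow i (m' i)).det := by
  have hU : ∀ (i : Fin N) (σ : Equiv.Perm (Fin N)),
      ∏ j, (m.updateRow i (m' i)) (σ j) j
        = m' i (σ⁻¹ i) * ∏ j ∈ Finset.univ.erase (σ⁻¹ i), m (σ j) j := by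
    intro i σ
    rw [← Finset.mul_prod_erase _ _ (Finset.mem_univ (σ⁻¹ i))]
    congr 1
    · rw [show σ (σ⁻¹ i) = i from σ.apply_symm_apply i, Matrix.updateRow_self]
    · refine Finset.prod_congr rfl fun j hj => ?_
      have hne : σ j ≠ i := by
        intro hji
        exact (Finset.mem_erase.1 hj).1 (by
          apply σ.injective; rw [hji]; exact (σ.apply_symm_apply i).symm)
      rw [Matrix.updateRow_ne hne]
  have hdet : ∀ i : Fin N, (m.updateRow i (m' i)).det
      = ∑ σ : Equiv.Perm (Fin N), ((Equiv.Perm.sign σ : ℤ) : ℝ) *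
          (m' i (σ⁻¹ i) * ∏ j ∈ Finset.univ.erase (σ⁻¹ i), m (σ j) j) := by
    intro i
    rw [Matrix.det_apply']
    exact Finset.sum_congr rfl fun σ _ => by rw [hU]
  simp_rw [hdet]
  rw [Finset.sum_comm]
  refine Finset.sum_congr rfl fun σ _ => ?_
  rw [Finset.mul_sum]
  refine Fintype.sum_equiv σ _ _ fun i => ?_
  rw [show σ⁻¹ (σ i) = i from σ.symm_apply_apply i]
  ring

lemma aux_hasDerivAt_det {N : ℕ} (m : ℝ → Matrix (Fin N) (Fin N) ℝ)
    (m' : Matrix (Fin N) (Fin N) ℝ) (t₀ : ℝ)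
    (h : ∀ i j, HasDerivAt (fun t => m t i j) (m' i j) t₀) :
    HasDerivAt (fun t => (m t).det) (∑ i, ((m t₀).updateRow i (m' i)).det) t₀ := by
  have H : ∀ σ : Equiv.Perm (Fin N),
      HasDerivAt (fun t => ∏ i, m t (σ i) i)
        (∑ i, (∏ j ∈ Finset.univ.erase i, m t₀ (σ j) j) • m' (σ i) i) t₀ :=
    fun σ => HasDerivAt.fun_finsetProd (fun i _ => h (σ i) i)
  have H2 : HasDerivAt (fun t => ∑ σ : Equiv.Perm (Fin N),
        ((Equiv.Perm.sign σ : ℤ) : ℝ) * ∏ i, m t (σ i) i)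
      (∑ σ : Equiv.Perm (Fin N), ((Equiv.Perm.sign σ : ℤ) : ℝ) *
        ∑ i, (∏ j ∈ Finset.univ.erase i, m t₀ (σ j) j) * m' (σ i) i) t₀ := by
    refine HasDerivAt.fun_sum fun σ _ => ?_
    simpa [smul_eq_mul] using (H σ).const_mul (((Equiv.Perm.sign σ : ℤ) : ℝ))
  have hfun : (fun t => (m t).det)
      = fun t => ∑ σ : Equiv.Perm (Fin N),
          ((Equiv.Perm.sign σ : ℤ) : ℝ) * ∏ i, m t (σ i) i :=
    funext fun t => Matrix.det_apply' _
  rw [hfun, ← aux_swap (m t₀) m']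
  exact H2

/-- Jacobi's formula, in the form we need. -/
lemma aux_jacobi {N : ℕ} (m : ℝ → Matrix (Fin N) (Fin N) ℝ)
    (b : Matrix (Fin N) (Fin N) ℝ) (t₀ : ℝ)
    (h : ∀ i j, HasDerivAt (fun t => m t i j) ((b * m t₀) i j) t₀) :
    HasDerivAt (fun t => (m t).det) (b.trace * (m t₀).det) t₀ := by
  have := aux_hasDerivAt_det m (b * m t₀) t₀ h
  rwa [aux_sum_det_updateRow] at this

/-- The flow map is `C²`. -/
lemma aux_c2 (n : ℕ) (g u : ℝ × (Fin n → ℝ) → (Fin n → ℝ)) (hg : ContDiff ℝ 1 g)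
    (hu : ContDiff ℝ 1 u)
    (hDg : ContDiff ℝ 1 (fun p : ℝ × (Fin n → ℝ) =>
      fderiv ℝ (fun l => g (p.1, l)) p.2))
    (hflow : ∀ t l, deriv (fun s => g (s, l)) t = u (t, g (t, l))) :
    ContDiff ℝ 2 g := by
  have hgdiff : Differentiable ℝ g := hg.differentiable one_ne_zero
  have partial2g : ∀ (t : ℝ) (l : Fin n → ℝ), fderiv ℝ (fun l' => g (t, l')) l
      = (fderiv ℝ g (t, l)).comp (ContinuousLinearMap.inr ℝ ℝ (Fin n → ℝ)) := fun t l =>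
    ((hgdiff (t, l)).hasFDerivAt.comp l (hasFDerivAt_prodMk_right t l)).fderiv
  have partial1g : ∀ (t : ℝ) (l : Fin n → ℝ),
      HasDerivAt (fun s => g (s, l)) (fderiv ℝ g (t, l) (1, 0)) t := by
    intro t l
    simpa [Function.comp_def] using ((hgdiff (t, l)).hasFDerivAt.comp_hasDerivAt t
      ((hasDerivAt_id t).prodMk (hasDerivAt_const t l)))
  have hF10 : ∀ (t : ℝ) (l : Fin n → ℝ), fderiv ℝ g (t, l) (1, 0) = u (t, g (t, l)) := by
    intro t l
    rw [← (partial1g t l).deriv, hflow]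
  have hFΦ : (fderiv ℝ g) = fun p : ℝ × (Fin n → ℝ) =>
      (((ContinuousLinearMap.fst ℝ ℝ (Fin n → ℝ)).smulRight (u (p.1, g p))
        + (fderiv ℝ (fun l' => g (p.1, l')) p.2).comp
            (ContinuousLinearMap.snd ℝ ℝ (Fin n → ℝ))) :
          ℝ × (Fin n → ℝ) →L[ℝ] (Fin n → ℝ)) := by
    funext p
    apply ContinuousLinearMap.ext
    rintro ⟨s, w⟩
    have hsw : ((s, w) : ℝ × (Fin n → ℝ)) = s • ((1 : ℝ), (0 : Fin n → ℝ)) + ((0 : ℝ), w) := by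
      simp [Prod.ext_iff]
    rw [hsw, map_add, map_add, _root_.map_smul, _root_.map_smul]
    have h1 : fderiv ℝ g p ((1 : ℝ), (0 : Fin n → ℝ)) = u (p.1, g p) := by
      have := hF10 p.1 p.2
      simpa using this
    have h2 : fderiv ℝ g p ((0 : ℝ), w)
        = (fderiv ℝ (fun l' => g (p.1, l')) p.2) w := by
      rw [partial2g p.1 p.2]
      simp
    rw [h1, h2]
    simp
  rw [show (2 : WithTop ℕ∞) = 1 + 1 from rfl, contDiff_succ_iff_fderiv]
  refine ⟨hgdiff, by simp, ?_⟩
  rw [hFΦ]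
  apply ContDiff.add
  · exact (ContinuousLinearMap.smulRightL ℝ (ℝ × (Fin n → ℝ)) (Fin n → ℝ)
      (ContinuousLinearMap.fst ℝ ℝ (Fin n → ℝ))).contDiff.comp
      (hu.comp (contDiff_fst.prodMk hg))
  · exact hDg.clm_comp contDiff_const

/-- Clairaut-type identity: the time derivative of the spatial differential of the flow
is the spatial differential of the velocity composed with the spatial differential. -/
lemma aux_clairaut (n : ℕ) (g u : ℝ × (Fin n → ℝ) → (Fin n → ℝ))
    (hg : ContDiff ℝ 1 g) (hu : ContDiff ℝ 1 u) (hg2 : ContDiff ℝ 2 g)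
    (hflow : ∀ t l, deriv (fun s => g (s, l)) t = u (t, g (t, l)))
    (t₀ : ℝ) (l : Fin n → ℝ) :
    HasDerivAt (fun t => fderiv ℝ (fun l' => g (t, l')) l)
      (((fderiv ℝ u (t₀, g (t₀, l))).comp
          (ContinuousLinearMap.inr ℝ ℝ (Fin n → ℝ))).comp
        (fderiv ℝ (fun l' => g (t₀, l')) l)) t₀ := by
  have hgdiff : Differentiable ℝ g := hg.differentiable one_ne_zero
  have hudiff : Differentiable ℝ u := hu.differentiable one_ne_zero
  have partial2g : ∀ (t : ℝ) (l : Fin n → ℝ), fderiv ℝ (fun l' => g (t, l')) l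
      = (fderiv ℝ g (t, l)).comp (ContinuousLinearMap.inr ℝ ℝ (Fin n → ℝ)) := fun t l =>
    ((hgdiff (t, l)).hasFDerivAt.comp l (hasFDerivAt_prodMk_right t l)).fderiv
  have partial1g : ∀ (t : ℝ) (l : Fin n → ℝ),
      HasDerivAt (fun s => g (s, l)) (fderiv ℝ g (t, l) (1, 0)) t := by
    intro t l
    simpa [Function.comp_def] using ((hgdiff (t, l)).hasFDerivAt.comp_hasDerivAt t
      ((hasDerivAt_id t).prodMk (hasDerivAt_const t l)))
  have hF10 : ∀ (t : ℝ) (l : Fin n → ℝ), fderiv ℝ g (t, l) (1, 0) = u (t, g (t, l)) := by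
    intro t l
    rw [← (partial1g t l).deriv, hflow]
  have hF1 : ContDiff ℝ 1 (fderiv ℝ g) := by
    have h2 := (contDiff_succ_iff_fderiv (n := 1)).1 (by exact_mod_cast hg2)
    exact h2.2.2
  have hFdiff : DifferentiableAt ℝ (fderiv ℝ g) (t₀, l) :=
    hF1.differentiable one_ne_zero _
  set F'' := fderiv ℝ (fderiv ℝ g) (t₀, l) with hF''
  have hsymm : ∀ v w, F'' v w = F'' w v :=
    second_derivative_symmetric (fun y => (hgdiff y).hasFDerivAt) hFdiff.hasFDerivAt
  have hψ : HasDerivAt (fun t => fderiv ℝ g (t, l)) (F'' (1, 0)) t₀ := by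
    simpa [Function.comp_def] using (hFdiff.hasFDerivAt.comp_hasDerivAt t₀
      ((hasDerivAt_id t₀).prodMk (hasDerivAt_const t₀ l)))
  set Λ : ((ℝ × (Fin n → ℝ)) →L[ℝ] (Fin n → ℝ)) →L[ℝ]
      ((Fin n → ℝ) →L[ℝ] (Fin n → ℝ)) :=
    (ContinuousLinearMap.compL ℝ (Fin n → ℝ) (ℝ × (Fin n → ℝ)) (Fin n → ℝ)).flip
      (ContinuousLinearMap.inr ℝ ℝ (Fin n → ℝ)) with hΛ
  have hΛ_apply : ∀ L : (ℝ × (Fin n → ℝ)) →L[ℝ] (Fin n → ℝ),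
      Λ L = L.comp (ContinuousLinearMap.inr ℝ ℝ (Fin n → ℝ)) := fun L => rfl
  have hA' : HasDerivAt (fun t => fderiv ℝ (fun l' => g (t, l')) l)
      ((F'' (1, 0)).comp (ContinuousLinearMap.inr ℝ ℝ (Fin n → ℝ))) t₀ := by
    have := Λ.hasFDerivAt.comp_hasDerivAt t₀ hψ
    have heq : (fun t => Λ (fderiv ℝ g (t, l)))
        = fun t => fderiv ℝ (fun l' => g (t, l')) l := by
      funext t; rw [hΛ_apply, partial2g]
    rw [← hΛ_apply, ← heq]
    exact this
  have key : ∀ v, F'' (1, 0) ((0 : ℝ), v)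
      = (fderiv ℝ u (t₀, g (t₀, l))) ((0 : ℝ), fderiv ℝ (fun l' => g (t₀, l')) l v) := by
    have hχ : HasFDerivAt (fun l' => fderiv ℝ g (t₀, l'))
        (F''.comp (ContinuousLinearMap.inr ℝ ℝ (Fin n → ℝ))) l :=
      hFdiff.hasFDerivAt.comp l (hasFDerivAt_prodMk_right t₀ l)
    have hκ1 : HasFDerivAt (fun l' => fderiv ℝ g (t₀, l') ((1 : ℝ), (0 : Fin n → ℝ)))
        ((ContinuousLinearMap.apply ℝ (Fin n → ℝ) (((1 : ℝ), (0 : Fin n → ℝ)))).comp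
          (F''.comp (ContinuousLinearMap.inr ℝ ℝ (Fin n → ℝ)))) l :=
      (ContinuousLinearMap.apply ℝ (Fin n → ℝ)
        (((1 : ℝ), (0 : Fin n → ℝ)))).hasFDerivAt.comp l hχ
    have hgt : HasFDerivAt (fun l' => g (t₀, l')) (fderiv ℝ (fun l' => g (t₀, l')) l) l := by
      apply DifferentiableAt.hasFDerivAt
      exact (hgdiff (t₀, l)).comp l ((differentiableAt_const t₀).prodMk differentiableAt_id)
    have hκ2 : HasFDerivAt (fun l' => u (t₀, g (t₀, l')))
        ((fderiv ℝ u (t₀, g (t₀, l))).comp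
          (((0 : (Fin n → ℝ) →L[ℝ] ℝ)).prod (fderiv ℝ (fun l' => g (t₀, l')) l))) l := by
      have hpt : HasFDerivAt (fun l' => ((t₀ : ℝ), g (t₀, l')))
          (((0 : (Fin n → ℝ) →L[ℝ] ℝ)).prod (fderiv ℝ (fun l' => g (t₀, l')) l)) l := by
        simpa using (hasFDerivAt_const t₀ l).prodMk hgt
      exact (hudiff (t₀, g (t₀, l))).hasFDerivAt.comp l hpt
    have hfun : (fun l' => fderiv ℝ g (t₀, l') ((1 : ℝ), (0 : Fin n → ℝ)))
        = fun l' => u (t₀, g (t₀, l')) := funext fun l' => hF10 t₀ l'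
    have huniq := (hfun ▸ hκ1).unique hκ2
    intro v
    have h := DFunLike.congr_fun huniq v
    simp only [ContinuousLinearMap.comp_apply, ContinuousLinearMap.apply_apply,
      ContinuousLinearMap.inr_apply, ContinuousLinearMap.prod_apply,
      ContinuousLinearMap.zero_apply] at h
    rw [hsymm (1, 0) ((0 : ℝ), v)]
    exact h
  refine hA'.congr_deriv ?_
  refine ContinuousLinearMap.ext fun v => ?_
  simp only [ContinuousLinearMap.comp_apply, ContinuousLinearMap.inr_apply]
  exact key v

/-- **The advected density satisfies the continuity equation.**
If `ρ : ℝ × ℝⁿ → ℝ` is continuously differentiable and satisfies the push-forward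
relation `ρ(t, g(t,l)) · det (D_l g(t,l)) = ρ₀(l)` for all `(t, l)`, where for each `t`
the map `l ↦ g(t,l)` is a bijection of `ℝⁿ` (with everywhere-invertible spatial
differential), then `∂_t ρ(t,x) + div (ρ u)(t,x) = 0` for all `(t, x)`. -/
theorem advected_density_continuity_equation
    (n : ℕ)
    (g : ℝ × (Fin n → ℝ) → (Fin n → ℝ))
    (u : ℝ × (Fin n → ℝ) → (Fin n → ℝ))
    (ρ : ℝ × (Fin n → ℝ) → ℝ)
    (ρ₀ : (Fin n → ℝ) → ℝ)
    (hg : ContDiff ℝ 1 g)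
    (hDg : ContDiff ℝ 1 (fun p : ℝ × (Fin n → ℝ) =>
      fderiv ℝ (fun l => g (p.1, l)) p.2))
    (hDg_inv : ∀ (t : ℝ) (l : Fin n → ℝ),
      (fderiv ℝ (fun l' => g (t, l')) l).det ≠ 0)
    (hu : ContDiff ℝ 1 u)
    (hρ : ContDiff ℝ 1 ρ)
    (hflow : ∀ t l, deriv (fun s => g (s, l)) t = u (t, g (t, l)))
    (hbij : ∀ t : ℝ, Function.Bijective (fun l => g (t, l)))
    (hpush : ∀ (t : ℝ) (l : Fin n → ℝ),
      ρ (t, g (t, l)) * (fderiv ℝ (fun l' => g (t, l')) l).det = ρ₀ l) :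
    ∀ (t : ℝ) (x : Fin n → ℝ),
      deriv (fun s => ρ (s, x)) t
        + (∑ j, fderiv ℝ (fun x' => ρ (t, x') * u (t, x') j) x (Pi.single j 1)) = 0 := by
  intro t₀ x
  obtain ⟨l, hl⟩ := (hbij t₀).2 x
  simp only [] at hl
  have hgdiff : Differentiable ℝ g := hg.differentiable one_ne_zero
  have hudiff : Differentiable ℝ u := hu.differentiable one_ne_zero
  have hρdiff : Differentiable ℝ ρ := hρ.differentiable one_ne_zero
  have hg2 : ContDiff ℝ 2 g := aux_c2 n g u hg hu hDg hflow
  have hA : HasDerivAt (fun t => fderiv ℝ (fun l' => g (t, l')) l)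
      (((fderiv ℝ u (t₀, x)).comp (ContinuousLinearMap.inr ℝ ℝ (Fin n → ℝ))).comp
        (fderiv ℝ (fun l' => g (t₀, l')) l)) t₀ := by
    have := aux_clairaut n g u hg hu hg2 hflow t₀ l
    rwa [hl] at this
  set B : (Fin n → ℝ) →L[ℝ] (Fin n → ℝ) :=
    (fderiv ℝ u (t₀, x)).comp (ContinuousLinearMap.inr ℝ ℝ (Fin n → ℝ)) with hB
  set m : ℝ → Matrix (Fin n) (Fin n) ℝ := fun t =>
    LinearMap.toMatrix' (fderiv ℝ (fun l' => g (t, l')) l : (Fin n → ℝ) →ₗ[ℝ] (Fin n → ℝ))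
    with hm
  set bmat : Matrix (Fin n) (Fin n) ℝ :=
    LinearMap.toMatrix' (B : (Fin n → ℝ) →ₗ[ℝ] (Fin n → ℝ)) with hbmat
  have hdet : ∀ t, (fderiv ℝ (fun l' => g (t, l')) l).det = (m t).det := fun t =>
    (LinearMap.det_toMatrix' _).symm
  have hentry : ∀ i j, HasDerivAt (fun t => m t i j) ((bmat * m t₀) i j) t₀ := by
    intro i j
    have hsingle : (fun j' => if j' = j then (1 : ℝ) else 0) = Pi.single j 1 := by
      funext k; simp [Pi.single_apply]
    have hΘ := ((ContinuousLinearMap.proj (R := ℝ) (φ := fun _ : Fin n => ℝ) i).comp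
        (ContinuousLinearMap.apply ℝ (Fin n → ℝ)
          (fun j' => if j' = j then (1 : ℝ) else 0))).hasFDerivAt.comp_hasDerivAt t₀ hA
    have hfuneq : (fun t => ((ContinuousLinearMap.proj (R := ℝ) (φ := fun _ : Fin n => ℝ) i).comp
        (ContinuousLinearMap.apply ℝ (Fin n → ℝ)
          (fun j' => if j' = j then (1 : ℝ) else 0)))
          (fderiv ℝ (fun l' => g (t, l')) l)) = fun t => m t i j := by
      funext t
      simp [hm, LinearMap.toMatrix'_apply]
      rw [hsingle]
    have hval : ((ContinuousLinearMap.proj (R := ℝ) (φ := fun _ : Fin n => ℝ) i).comp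
        (ContinuousLinearMap.apply ℝ (Fin n → ℝ)
          (fun j' => if j' = j then (1 : ℝ) else 0)))
        (B.comp (fderiv ℝ (fun l' => g (t₀, l')) l)) = (bmat * m t₀) i j := by
      rw [hbmat, hm, ← LinearMap.toMatrix'_comp, LinearMap.toMatrix'_apply]
      rw [← hsingle]
      rfl
    rw [← hfuneq, ← hval]
    exact hΘ
  have hJ : HasDerivAt (fun t => (m t).det) (bmat.trace * (m t₀).det) t₀ :=
    aux_jacobi m bmat t₀ hentry
  have hG : HasDerivAt (fun t => g (t, l)) (u (t₀, x)) t₀ := by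
    have h1 : HasDerivAt (fun t => g (t, l)) (fderiv ℝ g (t₀, l) (1, 0)) t₀ := by
      simpa [Function.comp_def] using ((hgdiff (t₀, l)).hasFDerivAt.comp_hasDerivAt t₀
        ((hasDerivAt_id t₀).prodMk (hasDerivAt_const t₀ l)))
    have h2 : fderiv ℝ g (t₀, l) (1, 0) = u (t₀, g (t₀, l)) := by
      rw [← h1.deriv, hflow]
    rw [h2, hl] at h1
    exact h1
  have hρat : HasFDerivAt ρ (fderiv ℝ ρ (t₀, x)) (t₀, g (t₀, l)) := by
    rw [hl]; exact (hρdiff _).hasFDerivAt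
  have hP : HasDerivAt (fun t => ρ (t, g (t, l))) (fderiv ℝ ρ (t₀, x) (1, u (t₀, x))) t₀ :=
    hρat.comp_hasDerivAt t₀ ((hasDerivAt_id t₀).prodMk hG)
  have hPJ : (fun t => ρ (t, g (t, l)) * (m t).det) = fun _ => ρ₀ l :=
    funext fun t => by rw [← hdet t]; exact hpush t l
  have hzero : fderiv ℝ ρ (t₀, x) (1, u (t₀, x)) * (m t₀).det
      + ρ (t₀, g (t₀, l)) * (bmat.trace * (m t₀).det) = 0 := by
    have hprod := hP.fun_mul hJ
    rw [hPJ] at hprod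
    exact hprod.unique (hasDerivAt_const t₀ (ρ₀ l))
  have hJ0 : (m t₀).det ≠ 0 := by rw [← hdet]; exact hDg_inv t₀ l
  rw [hl] at hzero
  have hkey : fderiv ℝ ρ (t₀, x) (1, u (t₀, x)) + ρ (t₀, x) * bmat.trace = 0 := by
    have h2 : (fderiv ℝ ρ (t₀, x) (1, u (t₀, x)) + ρ (t₀, x) * bmat.trace) * (m t₀).det
        = 0 := by
      calc (fderiv ℝ ρ (t₀, x) (1, u (t₀, x)) + ρ (t₀, x) * bmat.trace) * (m t₀).det
          = fderiv ℝ ρ (t₀, x) (1, u (t₀, x)) * (m t₀).det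
            + ρ (t₀, x) * (bmat.trace * (m t₀).det) := by ring
        _ = 0 := hzero
    rcases mul_eq_zero.1 h2 with h | h
    · exact h
    · exact absurd h hJ0
  have htr : bmat.trace = ∑ j, fderiv ℝ u (t₀, x) ((0 : ℝ), Pi.single j 1) j := by
    rw [Matrix.trace]
    refine Finset.sum_congr rfl fun j _ => ?_
    have hsingle : (fun j' => if j' = j then (1 : ℝ) else 0) = Pi.single j 1 := by
      funext k; simp [Pi.single_apply]
    rw [Matrix.diag, hbmat, LinearMap.toMatrix'_apply]
    rfl
  have hd1 : deriv (fun s => ρ (s, x)) t₀ = fderiv ℝ ρ (t₀, x) (1, 0) := by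
    have h := ((hρdiff (t₀, x)).hasFDerivAt.comp_hasDerivAt t₀
      ((hasDerivAt_id t₀).prodMk (hasDerivAt_const t₀ x)))
    simpa [Function.comp_def] using h.deriv
  have hρx : HasFDerivAt (fun x' => ρ (t₀, x'))
      ((fderiv ℝ ρ (t₀, x)).comp (ContinuousLinearMap.inr ℝ ℝ (Fin n → ℝ))) x :=
    (hρdiff (t₀, x)).hasFDerivAt.comp x (hasFDerivAt_prodMk_right t₀ x)
  have hux : HasFDerivAt (fun x' => u (t₀, x'))
      ((fderiv ℝ u (t₀, x)).comp (ContinuousLinearMap.inr ℝ ℝ (Fin n → ℝ))) x :=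
    (hudiff (t₀, x)).hasFDerivAt.comp x (hasFDerivAt_prodMk_right t₀ x)
  have hterm : ∀ j, fderiv ℝ (fun x' => ρ (t₀, x') * u (t₀, x') j) x (Pi.single j 1)
      = u (t₀, x) j * fderiv ℝ ρ (t₀, x) ((0 : ℝ), Pi.single j 1)
        + ρ (t₀, x) * fderiv ℝ u (t₀, x) ((0 : ℝ), Pi.single j 1) j := by
    intro j
    have huj : HasFDerivAt (fun x' => u (t₀, x') j)
        ((ContinuousLinearMap.proj (R := ℝ) (φ := fun _ : Fin n => ℝ) j).comp
          ((fderiv ℝ u (t₀, x)).comp (ContinuousLinearMap.inr ℝ ℝ (Fin n → ℝ)))) x :=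
      (ContinuousLinearMap.proj (R := ℝ) (φ := fun _ : Fin n => ℝ) j).hasFDerivAt.comp x hux
    rw [(hρx.fun_mul huj).fderiv]
    simp only [ContinuousLinearMap.add_apply, ContinuousLinearMap.smul_apply,
      ContinuousLinearMap.comp_apply, ContinuousLinearMap.inr_apply,
      ContinuousLinearMap.proj_apply, smul_eq_mul]
    ring
  have hsum1 : ∑ j, u (t₀, x) j * fderiv ℝ ρ (t₀, x) ((0 : ℝ), Pi.single j 1)
      = fderiv ℝ ρ (t₀, x) ((0 : ℝ), u (t₀, x)) := by
    have hdecomp : (((0 : ℝ), u (t₀, x)) : ℝ × (Fin n → ℝ))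
        = ∑ j, u (t₀, x) j • (((0 : ℝ), Pi.single j 1) : ℝ × (Fin n → ℝ)) := by
      refine Prod.ext ?_ ?_
      · rw [Prod.fst_sum]; simp
      · rw [Prod.snd_sum]
        simp only [Prod.snd]
        funext k
        simp [Finset.sum_apply, Pi.single_apply, mul_comm]
    rw [hdecomp, map_sum]
    refine (Finset.sum_congr rfl fun j _ => ?_).symm
    rw [_root_.map_smul, smul_eq_mul]
  have hsplit : fderiv ℝ ρ (t₀, x) (1, u (t₀, x))
      = fderiv ℝ ρ (t₀, x) (1, 0) + fderiv ℝ ρ (t₀, x) ((0 : ℝ), u (t₀, x)) := by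
    rw [← map_add]
    congr 1
    simp
  rw [hd1]
  calc fderiv ℝ ρ (t₀, x) (1, 0)
      + ∑ j, fderiv ℝ (fun x' => ρ (t₀, x') * u (t₀, x') j) x (Pi.single j 1)
      = fderiv ℝ ρ (t₀, x) (1, 0)
        + (∑ j, u (t₀, x) j * fderiv ℝ ρ (t₀, x) ((0 : ℝ), Pi.single j 1)
          + ρ (t₀, x) * ∑ j, fderiv ℝ u (t₀, x) ((0 : ℝ), Pi.single j 1) j) := by
        rw [Finset.sum_congr rfl fun j _ => hterm j, Finset.sum_add_distrib,
          Finset.mul_sum]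
    _ = fderiv ℝ ρ (t₀, x) (1, u (t₀, x)) + ρ (t₀, x) * bmat.trace := by
        rw [hsum1, hsplit, htr]; ring
    _ = 0 := hkey
end

section
/- Lie derivative of a one-form along the flow (pullback formula for v·dx): for every continuously differentiable time-independent vector field v : ℝⁿ → ℝⁿ and all (t,l), ∂_t [ (D_l g(t,l))ᵀ v(g(t,l)) ] = (D_l g(t,l))ᵀ [ (u(t,·)·∇)v + (∇u(t,·))ᵀ v ](g(t,l)), where ((u·∇)v)ᵢ = Σⱼ uⱼ ∂_{xⱼ} vᵢ and ((∇u)ᵀ v)ᵢ = Σⱼ vⱼ ∂_{xᵢ} uⱼ. -/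
open ContinuousLinearMap Asymptotics Filter

lemma hasFDerivAt_of_partials
    {E F : Type*} [NormedAddCommGroup E] [NormedSpace ℝ E]
    [NormedAddCommGroup F] [NormedSpace ℝ F]
    (f : ℝ × E → F) (T : ℝ × E → F) (F' : ℝ × E → E →L[ℝ] F)
    (hT : Continuous T)
    (hdt : ∀ p : ℝ × E, HasDerivAt (fun s => f (s, p.2)) (T p) p.1)
    (hdl : ∀ p : ℝ × E, HasFDerivAt (fun l => f (p.1, l)) (F' p) p.2)
    (p : ℝ × E) :
    HasFDerivAt f ((ContinuousLinearMap.fst ℝ ℝ E).smulRight (T p)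
      + (F' p).comp (ContinuousLinearMap.snd ℝ ℝ E)) p := by
  obtain ⟨t, l⟩ := p
  rw [hasFDerivAt_iff_isLittleO_nhds_zero]
  have key : (fun h : ℝ × E => f ((t, l) + h) - f (t, l)
      - ((ContinuousLinearMap.fst ℝ ℝ E).smulRight (T (t, l))
        + (F' (t, l)).comp (ContinuousLinearMap.snd ℝ ℝ E)) h)
      = (fun h : ℝ × E => (f (t + h.1, l + h.2) - f (t, l + h.2) - h.1 • T (t, l))
        + (f (t, l + h.2) - f (t, l) - F' (t, l) h.2)) := by
    funext h
    have hp : (t, l) + h = (t + h.1, l + h.2) := by simp [Prod.ext_iff]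
    rw [hp]
    simp [ContinuousLinearMap.add_apply, ContinuousLinearMap.smulRight_apply,
      Prod.fst_add, Prod.snd_add]
    abel
  rw [key]
  have h2 : (fun h : ℝ × E => f (t, l + h.2) - f (t, l) - F' (t, l) h.2)
      =o[nhds (0 : ℝ × E)] fun h => h := by
    have := (hasFDerivAt_iff_isLittleO_nhds_zero.1 (hdl (t, l)))
    have hcomp := this.comp_tendsto (continuous_snd.tendsto' (0 : ℝ × E) 0 rfl)
    simp only [Function.comp_def] at hcomp
    have hOB : (fun h : ℝ × E => h.2) =O[nhds (0 : ℝ × E)] (fun h => h) :=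
      isBigO_of_le (g := fun h : ℝ × E => h) _ fun h => by simpa using norm_snd_le h
    exact hcomp.trans_isBigO hOB
  have h1 : (fun h : ℝ × E => f (t + h.1, l + h.2) - f (t, l + h.2) - h.1 • T (t, l))
      =o[nhds (0 : ℝ × E)] fun h => h := by
    rw [isLittleO_iff]
    intro c hc
    have hcont : ∀ᶠ q in nhds (t, l), ‖T q - T (t, l)‖ < c := by
      have := Metric.tendsto_nhds.mp (hT.continuousAt (x := (t, l))) c hc
      simpa [dist_eq_norm] using this
    obtain ⟨δ, hδ, hball⟩ := Metric.eventually_nhds_iff_ball.mp hcont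
    rw [Metric.eventually_nhds_iff_ball]
    refine ⟨δ / 2, by linarith, fun h hh => ?_⟩
    have hnorm : ‖h‖ < δ / 2 := by simpa [dist_eq_norm] using hh
    have h1le : ‖h.1‖ ≤ ‖h‖ := norm_fst_le h
    have h2le : ‖h.2‖ ≤ ‖h‖ := norm_snd_le h
    set φ : ℝ → F := fun τ => f (t + τ, l + h.2) - τ • T (t, l) with hφ
    have hseg : ∀ τ ∈ segment ℝ (0 : ℝ) h.1, ‖τ‖ ≤ ‖h.1‖ := by
      intro τ hτ
      have : τ ∈ Metric.closedBall (0 : ℝ) ‖h.1‖ :=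
        (convex_closedBall (0:ℝ) ‖h.1‖).segment_subset (by simp)
          (by simp [Metric.mem_closedBall, dist_eq_norm]) hτ
      simpa [Metric.mem_closedBall, dist_eq_norm] using this
    have hder : ∀ τ ∈ segment ℝ (0 : ℝ) h.1,
        HasDerivWithinAt φ (T (t + τ, l + h.2) - T (t, l)) (segment ℝ (0:ℝ) h.1) τ := by
      intro τ hτ
      have hc1 : HasDerivAt (fun τ' : ℝ => f (t + τ', l + h.2)) (T (t + τ, l + h.2)) τ := by
        have hbase : HasDerivAt (fun s => f (s, l + h.2)) (T (t + τ, l + h.2)) (t + τ) :=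
          hdt (t + τ, l + h.2)
        have hlin : HasDerivAt (fun τ' : ℝ => t + τ') 1 τ := by
          simpa using (hasDerivAt_id τ).const_add t
        simpa [Function.comp_def] using hbase.scomp τ hlin
      have hc2 : HasDerivAt (fun τ' : ℝ => τ' • T (t, l)) (T (t, l)) τ := by
        simpa using (hasDerivAt_id τ).smul_const (T (t, l))
      exact (hc1.sub hc2).hasDerivWithinAt
    have hbound : ∀ τ ∈ segment ℝ (0 : ℝ) h.1, ‖T (t + τ, l + h.2) - T (t, l)‖ ≤ c := by
      intro τ hτ
      refine le_of_lt (hball _ ?_)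
      have : dist (t + τ, l + h.2) (t, l) = max ‖τ‖ ‖h.2‖ := by
        rw [Prod.dist_eq]; simp [dist_eq_norm]
      rw [Metric.mem_ball, this]
      exact max_lt (lt_of_le_of_lt ((hseg τ hτ).trans h1le) (by linarith))
        (lt_of_le_of_lt h2le (by linarith))
    have := Convex.norm_image_sub_le_of_norm_hasDerivWithin_le hder hbound
      (convex_segment _ _) (left_mem_segment ℝ (0:ℝ) h.1) (right_mem_segment ℝ (0:ℝ) h.1)
    have heq : φ h.1 - φ 0 = f (t + h.1, l + h.2) - f (t, l + h.2) - h.1 • T (t, l) := by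
      simp [hφ]; abel
    rw [heq] at this
    calc ‖f (t + h.1, l + h.2) - f (t, l + h.2) - h.1 • T (t, l)‖
        ≤ c * ‖h.1 - 0‖ := this
      _ ≤ c * ‖h‖ := by
          rw [sub_zero]; exact mul_le_mul_of_nonneg_left h1le (le_of_lt hc)
  exact h1.add h2

lemma clm_expand {n : ℕ} (A : (Fin n → ℝ) →L[ℝ] (Fin n → ℝ)) (w : Fin n → ℝ) (j : Fin n) :
    A w j = ∑ k, w k * A (Pi.single k 1) j := by
  have hw : w = ∑ k, w k • (Pi.single k 1 : Fin n → ℝ) := by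
    funext m
    simp [Finset.sum_apply, Pi.single_apply]
  conv_lhs => rw [hw, map_sum]
  simp [Finset.sum_apply]

lemma clm_expand_scalar {n : ℕ} (A : (Fin n → ℝ) →L[ℝ] ℝ) (w : Fin n → ℝ) :
    A w = ∑ k, w k * A (Pi.single k 1) := by
  have hw : w = ∑ k, w k • (Pi.single k 1 : Fin n → ℝ) := by
    funext m
    simp [Finset.sum_apply, Pi.single_apply]
  conv_lhs => rw [hw, map_sum]
  simp

/-- **Lie derivative of a one-form along the flow** (pullback formula for `v·dx`).
For every continuously differentiable time-independent vector field `v : ℝⁿ → ℝⁿ` and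
all `(t, l)`,
`∂_t [(D_l g(t,l))ᵀ v(g(t,l))]
  = (D_l g(t,l))ᵀ [(u(t,·)·∇) v + (∇ u(t,·))ᵀ v](g(t,l))`,
written componentwise: component `i` of `(D_l g)ᵀ w` is `Σ_j (D_l g (e_i))_j w_j`,
`((u·∇)v)_j = Σ_k u_k ∂_{x_k} v_j` and `((∇u)ᵀ v)_j = Σ_k v_k ∂_{x_j} u_k`. -/
theorem lie_derivative_one_form_pullback
    (n : ℕ)
    (g : ℝ × (Fin n → ℝ) → (Fin n → ℝ))
    (u : ℝ × (Fin n → ℝ) → (Fin n → ℝ))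
    (v : (Fin n → ℝ) → (Fin n → ℝ))
    (hg : ContDiff ℝ 1 g)
    (hDg : ContDiff ℝ 1 (fun p : ℝ × (Fin n → ℝ) =>
      fderiv ℝ (fun l => g (p.1, l)) p.2))
    (hu : ContDiff ℝ 1 u)
    (hv : ContDiff ℝ 1 v)
    (hflow : ∀ t l, deriv (fun s => g (s, l)) t = u (t, g (t, l))) :
    ∀ (t : ℝ) (l : Fin n → ℝ) (i : Fin n),
      deriv (fun s =>
          ∑ j, (fderiv ℝ (fun l' => g (s, l')) l (Pi.single i 1)) j * v (g (s, l)) j) t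
        = ∑ j, (fderiv ℝ (fun l' => g (t, l')) l (Pi.single i 1)) j *
            ((∑ k, u (t, g (t, l)) k *
                fderiv ℝ (fun x => v x j) (g (t, l)) (Pi.single k 1))
              + ∑ k, v (g (t, l)) k *
                  fderiv ℝ (fun x => u (t, x) k) (g (t, l)) (Pi.single j 1)) := by
  intro t l i
  let F : ℝ × (Fin n → ℝ) → (Fin n → ℝ) →L[ℝ] (Fin n → ℝ) := fun p => fderiv ℝ (fun l' => g (p.1, l')) p.2
  let T : ℝ × (Fin n → ℝ) → (Fin n → ℝ) := fun p => u (p.1, g p)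
  have hgd : Differentiable ℝ g := hg.differentiable one_ne_zero
  have hdl : ∀ p : ℝ × (Fin n → ℝ), HasFDerivAt (fun l' => g (p.1, l')) (F p) p.2 := by
    intro p
    have : DifferentiableAt ℝ (fun l' => g (p.1, l')) p.2 :=
      (hgd p).comp p.2 ((differentiableAt_const p.1).prodMk differentiableAt_id)
    exact this.hasFDerivAt
  have hdt : ∀ p : ℝ × (Fin n → ℝ), HasDerivAt (fun s => g (s, p.2)) (T p) p.1 := by
    intro p
    have hdiff : DifferentiableAt ℝ (fun s => g (s, p.2)) p.1 :=
      (hgd p).comp p.1 (differentiableAt_id.prodMk (differentiableAt_const p.2))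
    have h2 : HasDerivAt (fun s => g (s, p.2)) (u (p.1, g (p.1, p.2))) p.1 := by
      rw [← hflow p.1 p.2]; exact hdiff.hasDerivAt
    exact h2
  have hTc1 : ContDiff ℝ 1 T := hu.comp (contDiff_fst.prodMk hg)
  let L : ℝ × (Fin n → ℝ) → (ℝ × (Fin n → ℝ)) →L[ℝ] (Fin n → ℝ) := fun p =>
    (ContinuousLinearMap.fst ℝ ℝ (Fin n → ℝ)).smulRight (T p)
      + (F p).comp (ContinuousLinearMap.snd ℝ ℝ (Fin n → ℝ))
  have hL : ∀ p : ℝ × (Fin n → ℝ), HasFDerivAt g (L p) p := fun p =>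
    hasFDerivAt_of_partials g T F hTc1.continuous hdt hdl p
  have hLc1 : ContDiff ℝ 1 L := by
    have h1 : ContDiff ℝ 1 (fun p : ℝ × (Fin n → ℝ) =>
        (ContinuousLinearMap.fst ℝ ℝ (Fin n → ℝ)).smulRight (T p)) :=
      (ContinuousLinearMap.smulRightL ℝ (ℝ × (Fin n → ℝ)) (Fin n → ℝ)
        (ContinuousLinearMap.fst ℝ ℝ (Fin n → ℝ))).contDiff.comp hTc1
    have h2 : ContDiff ℝ 1 (fun p : ℝ × (Fin n → ℝ) =>
        (F p).comp (ContinuousLinearMap.snd ℝ ℝ (Fin n → ℝ))) :=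
      hDg.clm_comp contDiff_const
    exact h1.add h2
  have hM : HasFDerivAt L (fderiv ℝ L (t, l)) (t, l) :=
    (hLc1.differentiable one_ne_zero (t, l)).hasFDerivAt
  set M := fderiv ℝ L (t, l) with hMdef
  have hsymm : ∀ a b : ℝ × (Fin n → ℝ), M a b = M b a := fun a b =>
    second_derivative_symmetric_of_eventually (Filter.Eventually.of_forall hL) hM a b
  -- evaluation identities
  have hFL : ∀ (q : ℝ × (Fin n → ℝ)) (w : (Fin n → ℝ)), F q w = L q (0, w) := by
    intro q w
    simp [L]
  have hTL : ∀ q : ℝ × (Fin n → ℝ), T q = L q (1, 0) := by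
    intro q
    simp [L]
  -- derivative of s ↦ F (s, l) eᵢ
  have hc : HasDerivAt (fun s => L (s, l)) (M (1, (0 : (Fin n → ℝ)))) t := by
    have h1 : HasDerivAt (fun s : ℝ => (s, l)) ((1 : ℝ), (0 : (Fin n → ℝ))) t :=
      (hasDerivAt_id t).prodMk (hasDerivAt_const t l)
    exact hM.comp_hasDerivAt t h1
  have hFd : HasDerivAt (fun s => F (s, l) (Pi.single i 1))
      (M (1, (0 : (Fin n → ℝ))) ((0 : ℝ), Pi.single i 1)) t := by
    have happ := hc.clm_apply (hasDerivAt_const t (((0 : ℝ), Pi.single i (1:ℝ)) : ℝ × (Fin n → ℝ)))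
    simp only [smul_zero, map_zero, add_zero] at happ
    have hfun : (fun s => F (s, l) (Pi.single i 1))
        = fun s => L (s, l) ((0 : ℝ), Pi.single i 1) := funext fun s => hFL (s, l) _
    rw [hfun]
    simpa using happ
  -- identify the mixed partial
  let gp := g (t, l)
  let Du : (Fin n → ℝ) →L[ℝ] (Fin n → ℝ) := fderiv ℝ (fun x => u (t, x)) gp
  have hud : HasFDerivAt (fun x => u (t, x)) Du gp := by
    have : DifferentiableAt ℝ (fun x => u (t, x)) gp :=
      ((hu.differentiable one_ne_zero) (t, gp)).comp gp
        ((differentiableAt_const t).prodMk differentiableAt_id)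
    exact this.hasFDerivAt
  let W : (Fin n → ℝ) := F (t, l) (Pi.single i 1)
  have hmixed : M (1, (0 : (Fin n → ℝ))) ((0 : ℝ), Pi.single i 1) = Du W := by
    have hN : HasFDerivAt (fun l' => L (t, l'))
        (M.comp (ContinuousLinearMap.inr ℝ ℝ (Fin n → ℝ))) l :=
      hM.comp l (hasFDerivAt_prodMk_right t l)
    have hTd : HasFDerivAt (fun l' => T (t, l'))
        ((ContinuousLinearMap.apply ℝ (Fin n → ℝ) (((1 : ℝ), (0 : (Fin n → ℝ))) : ℝ × (Fin n → ℝ))).comp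
          (M.comp (ContinuousLinearMap.inr ℝ ℝ (Fin n → ℝ)))) l := by
      have := (ContinuousLinearMap.apply ℝ (Fin n → ℝ) (((1 : ℝ), (0 : (Fin n → ℝ))) : ℝ × (Fin n → ℝ))).hasFDerivAt.comp l hN
      have hfun : (fun l' => T (t, l')) = fun l' => L (t, l') ((1 : ℝ), (0 : (Fin n → ℝ))) :=
        funext fun l' => hTL (t, l')
      rw [hfun]
      exact this
    have hUc : HasFDerivAt (fun l' => T (t, l')) (Du.comp (F (t, l))) l :=
      by have := hud.comp l (hdl (t, l)); exact this
    have huniq := hTd.unique hUc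
    have := congrFun (congrArg (fun (A : (Fin n → ℝ) →L[ℝ] (Fin n → ℝ)) => (A : (Fin n → ℝ) → (Fin n → ℝ))) huniq) (Pi.single i 1)
    simp only [ContinuousLinearMap.comp_apply, ContinuousLinearMap.inr_apply,
      ContinuousLinearMap.apply_apply] at this
    rw [hsymm]
    exact this
  rw [hmixed] at hFd
  -- componentwise derivatives
  let Dv : Fin n → (Fin n → ℝ) →L[ℝ] ℝ := fun j => fderiv ℝ (fun x => v x j) gp
  have hvd : ∀ j, HasFDerivAt (fun x => v x j) (Dv j) gp := by
    intro j
    have : DifferentiableAt ℝ (fun x => v x j) gp :=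
      (ContinuousLinearMap.proj (R := ℝ) (φ := fun _ : Fin n => ℝ) j).differentiableAt.comp gp ((hv.differentiable one_ne_zero) gp)
    exact this.hasFDerivAt
  let U : (Fin n → ℝ) := T (t, l)
  have hsum : HasDerivAt (fun s => ∑ j, F (s, l) (Pi.single i 1) j * v (g (s, l)) j)
      (∑ j, ((Du W) j * v gp j + W j * (Dv j) U)) t := by
    apply HasDerivAt.fun_sum
    intro j _
    have haj : HasDerivAt (fun s => F (s, l) (Pi.single i 1) j) ((Du W) j) t :=
      (ContinuousLinearMap.proj (R := ℝ) (φ := fun _ : Fin n => ℝ) j).hasFDerivAt.comp_hasDerivAt t hFd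
    have hbj : HasDerivAt (fun s => v (g (s, l)) j) ((Dv j) U) t :=
      by have := (hvd j).comp_hasDerivAt t (hdt (t, l)); exact this
    exact haj.mul hbj
  -- rewrite the goal
  have hderiv_eq : deriv (fun s =>
      ∑ j, (fderiv ℝ (fun l' => g (s, l')) l (Pi.single i 1)) j * v (g (s, l)) j) t
      = ∑ j, ((Du W) j * v gp j + W j * (Dv j) U) := hsum.deriv
  rw [hderiv_eq]
  -- final algebra
  have hcoord_u : ∀ (k : Fin n) (w : (Fin n → ℝ)),
      fderiv ℝ (fun x => u (t, x) k) gp w = (Du w) k := by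
    intro k w
    have h1 : HasFDerivAt (fun x => u (t, x) k)
        ((ContinuousLinearMap.proj k).comp Du) gp :=
      (ContinuousLinearMap.proj (R := ℝ) (φ := fun _ : Fin n => ℝ) k).hasFDerivAt.comp gp hud
    rw [h1.fderiv]
    simp
  have key1 : ∑ j, (Du W) j * v gp j
      = ∑ j, W j * ∑ k, v gp k * (Du (Pi.single j 1)) k := by
    have hW : ∀ j : Fin n, (Du W) j = ∑ m, W m * (Du (Pi.single m 1)) j :=
      fun j => clm_expand Du W j
    calc ∑ j, (Du W) j * v gp j
        = ∑ j, ∑ m, W m * (Du (Pi.single m 1)) j * v gp j := by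
          simp_rw [hW, Finset.sum_mul]
      _ = ∑ m, ∑ j, W m * (Du (Pi.single m 1)) j * v gp j := Finset.sum_comm
      _ = ∑ j, W j * ∑ k, v gp k * (Du (Pi.single j 1)) k := by
          refine Finset.sum_congr rfl fun m _ => ?_
          rw [Finset.mul_sum]
          refine Finset.sum_congr rfl fun k _ => ?_
          ring
  have key2 : ∀ j, (Dv j) U = ∑ k, U k * (Dv j) (Pi.single k 1) :=
    fun j => clm_expand_scalar (Dv j) U
  rw [Finset.sum_add_distrib, key1, ← Finset.sum_add_distrib]
  refine Finset.sum_congr rfl fun j _ => ?_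
  rw [key2 j, ← mul_add]
  congr 1
  rw [add_comm]
  congr 1
  refine Finset.sum_congr rfl fun k _ => ?_
  rw [hcoord_u k]
end

section
/- Pullback formula for the momentum density v·dx ⊗ dⁿx (the paper's computation of g_t^* L_u(v·dx ⊗ dⁿx)): for every continuously differentiable time-independent vector field v : ℝⁿ → ℝⁿ and all (t,l), ∂_t [ det(D_l g(t,l)) · (D_l g(t,l))ᵀ v(g(t,l)) ] = det(D_l g(t,l)) · (D_l g(t,l))ᵀ [ ∇·(u(t,·) ⊗ v) + (∇u(t,·))ᵀ v ](g(t,l)), where (∇·(u ⊗ v))ᵢ = Σⱼ ∂_{xⱼ}(uⱼ vᵢ) and ((∇u)ᵀ v)ᵢ = Σⱼ vⱼ ∂_{xᵢ} uⱼ. -/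
open Matrix Finset

lemma clm_apply_expand {n : ℕ} (T : (Fin n → ℝ) →L[ℝ] (Fin n → ℝ)) (y : Fin n → ℝ) (p : Fin n) :
    T y p = ∑ m, y m * T (Pi.single m 1) p := by
  conv_lhs => rw [← Finset.univ_sum_single y]
  rw [map_sum, Finset.sum_apply]
  apply Finset.sum_congr rfl
  intro m _
  have h : Pi.single m (y m) = y m • (Pi.single m (1:ℝ) : Fin n → ℝ) := by
    ext q; by_cases h : q = m <;> simp [Pi.single_apply, h]
  rw [h, _root_.map_smul]; simp

lemma my_sum_det_updateColumn (n : ℕ) (M B : Matrix (Fin n) (Fin n) ℝ) :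
    ∑ j, (M.updateCol j (fun p => (B * M) p j)).det = B.trace * M.det := by
  have h : ∀ j : Fin n, (M.updateCol j (fun p => (B * M) p j)).det
      = (M.adjugate * (B * M)) j j := by
    intro j
    rw [← Matrix.cramer_apply, Matrix.cramer_eq_adjugate_mulVec]
    simp [Matrix.mulVec, Matrix.mul_apply, dotProduct]
  simp only [h]
  have h2 : ∑ j, (M.adjugate * (B * M)) j j = Matrix.trace (M.adjugate * (B * M)) := rfl
  rw [h2, ← Matrix.mul_assoc, Matrix.trace_mul_comm, ← Matrix.mul_assoc,
    Matrix.mul_adjugate, Matrix.smul_mul, Matrix.one_mul, Matrix.trace_smul]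
  simp [mul_comm]

lemma my_hasDerivAt_det (n : ℕ) (M : ℝ → Matrix (Fin n) (Fin n) ℝ)
    (M' : Matrix (Fin n) (Fin n) ℝ) (t : ℝ)
    (h : ∀ p q, HasDerivAt (fun s => M s p q) (M' p q) t) :
    HasDerivAt (fun s => (M s).det)
      (∑ j, ((M t).updateCol j (fun p => M' p j)).det) t := by
  have key : ∀ s, (M s).det = ∑ σ : Equiv.Perm (Fin n),
      (Equiv.Perm.sign σ : ℝ) * ∏ i, M s (σ i) i := by
    intro s; rw [Matrix.det_apply]; congr 1; ext σ
    simp [Units.smul_def, zsmul_eq_mul]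
  have key2 : ∀ j : Fin n, ((M t).updateCol j (fun p => M' p j)).det
      = ∑ σ : Equiv.Perm (Fin n), (Equiv.Perm.sign σ : ℝ) *
          (M' (σ j) j * ∏ i ∈ univ.erase j, M t (σ i) i) := by
    intro j
    rw [Matrix.det_apply]; congr 1; ext σ
    rw [Units.smul_def, zsmul_eq_mul]; congr 1
    rw [← Finset.mul_prod_erase univ _ (mem_univ j)]
    congr 1
    · simp [Matrix.updateCol_apply]
    · apply Finset.prod_congr rfl
      intro i hi
      simp [Matrix.updateCol_apply, (Finset.mem_erase.1 hi).1]
  simp only [key, key2]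
  rw [Finset.sum_comm]
  apply HasDerivAt.fun_sum
  intro σ _
  have h2 := (HasDerivAt.fun_finsetProd (u := (univ : Finset (Fin n)))
    (f := fun i s => M s (σ i) i) (f' := fun i => M' (σ i) i) (x := t)
    (fun i _ => h (σ i) i)).const_mul ((Equiv.Perm.sign σ : ℤ) : ℝ)
  refine h2.congr_deriv ?_
  rw [Finset.mul_sum]
  apply Finset.sum_congr rfl
  intro j _
  simp [smul_eq_mul]
  ring

lemma final_algebra {n : ℕ} (a vg ug : Fin n → ℝ) (b c : Fin n → Fin n → ℝ) (d : ℝ) :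
    (∑ k, b k k) * d * (∑ j, a j * vg j)
      + d * (∑ j, ((∑ m, a m * b m j) * vg j + a j * (∑ k, ug k * c k j)))
    = d * ∑ j, a j * ((∑ k, (ug k * c k j + vg j * b k k)) + ∑ k, vg k * b j k) := by
  have key : ∑ j, (∑ m, a m * b m j) * vg j = ∑ j, a j * ∑ k, vg k * b j k := by
    simp only [Finset.sum_mul, Finset.mul_sum]
    rw [Finset.sum_comm]
    exact Finset.sum_congr rfl fun j _ => Finset.sum_congr rfl fun m _ => by ring
  have expand2 : ∀ j, a j * (∑ k, ug k * c k j + ∑ k, vg j * b k k + ∑ k, vg k * b j k)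
      = a j * (∑ k, ug k * c k j) + (∑ k, b k k) * (a j * vg j) + a j * (∑ k, vg k * b j k) := by
    intro j
    rw [← Finset.mul_sum]
    ring
  simp only [Finset.sum_add_distrib, expand2]
  rw [key, ← Finset.mul_sum]
  ring

lemma fderiv_comp_proj {n : ℕ} {F : (Fin n → ℝ) → (Fin n → ℝ)} {x : Fin n → ℝ}
    (hF : DifferentiableAt ℝ F x) (k : Fin n) (w : Fin n → ℝ) :
    fderiv ℝ (fun y => F y k) x w = fderiv ℝ F x w k := by
  have h := ((ContinuousLinearMap.proj (R := ℝ) (φ := fun _ : Fin n => ℝ) k).hasFDerivAt.comp x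
    hF.hasFDerivAt).fderiv
  have e : (fun y => F y k) = (⇑(ContinuousLinearMap.proj (R := ℝ) (φ := fun _ : Fin n => ℝ) k)) ∘ F := rfl
  rw [e, h]; rfl

/-- **Pullback formula for the momentum density `v·dx ⊗ dⁿx`** (the computation of
`g_t^* L_u (v·dx ⊗ dⁿx)`). For every continuously differentiable time-independent
vector field `v : ℝⁿ → ℝⁿ` and all `(t, l)`,
`∂_t [det (D_l g(t,l)) · (D_l g(t,l))ᵀ v(g(t,l))]
  = det (D_l g(t,l)) · (D_l g(t,l))ᵀ [∇·(u(t,·) ⊗ v) + (∇ u(t,·))ᵀ v](g(t,l))`,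
written componentwise: component `i` of `(D_l g)ᵀ w` is `Σ_j (D_l g (e_i))_j w_j`,
`(∇·(u ⊗ v))_j = Σ_k ∂_{x_k}(u_k v_j)` and `((∇u)ᵀ v)_j = Σ_k v_k ∂_{x_j} u_k`. -/
theorem momentum_density_pullback_formula
    (n : ℕ)
    (g : ℝ × (Fin n → ℝ) → (Fin n → ℝ))
    (u : ℝ × (Fin n → ℝ) → (Fin n → ℝ))
    (v : (Fin n → ℝ) → (Fin n → ℝ))
    (hg : ContDiff ℝ 1 g)
    (hDg : ContDiff ℝ 1 (fun p : ℝ × (Fin n → ℝ) =>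
      fderiv ℝ (fun l => g (p.1, l)) p.2))
    (hu : ContDiff ℝ 1 u)
    (hv : ContDiff ℝ 1 v)
    (hflow : ∀ t l, deriv (fun s => g (s, l)) t = u (t, g (t, l))) :
    ∀ (t : ℝ) (l : Fin n → ℝ) (i : Fin n),
      deriv (fun s =>
          (fderiv ℝ (fun l' => g (s, l')) l).det *
            ∑ j, (fderiv ℝ (fun l' => g (s, l')) l (Pi.single i 1)) j * v (g (s, l)) j) t
        = (fderiv ℝ (fun l' => g (t, l')) l).det *
            ∑ j, (fderiv ℝ (fun l' => g (t, l')) l (Pi.single i 1)) j *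
              ((∑ k, fderiv ℝ (fun x => u (t, x) k * v x j) (g (t, l)) (Pi.single k 1))
                + ∑ k, v (g (t, l)) k *
                    fderiv ℝ (fun x => u (t, x) k) (g (t, l)) (Pi.single j 1)) := by
  have hvd : Differentiable ℝ v := hv.differentiable one_ne_zero
  have hgd : Differentiable ℝ g := hg.differentiable one_ne_zero
  have hud : Differentiable ℝ u := hu.differentiable one_ne_zero
  have F1 : ∀ p : ℝ × (Fin n → ℝ), fderiv ℝ (fun l' => g (p.1, l')) p.2
      = (fderiv ℝ g p).comp (ContinuousLinearMap.inr ℝ ℝ (Fin n → ℝ)) := fun p =>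
    ((hgd p).hasFDerivAt.comp p.2 (hasFDerivAt_prodMk_right p.1 p.2)).fderiv
  have F2 : ∀ p : ℝ × (Fin n → ℝ), fderiv ℝ g p (1, 0) = u (p.1, g p) := by
    intro p
    have h1 : HasDerivAt (fun s => g (s, p.2)) (fderiv ℝ g p (1, 0)) p.1 := by
      simpa [Function.comp_def] using (hgd p).hasFDerivAt.comp_hasDerivAt p.1
        ((hasDerivAt_id p.1).prodMk (hasDerivAt_const p.1 p.2))
    have h2 := hflow p.1 p.2
    rw [h1.deriv] at h2
    simpa using h2
  have hU : ContDiff ℝ 1 (fun p : ℝ × (Fin n → ℝ) => u (p.1, g p)) :=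
    hu.comp (contDiff_fst.prodMk hg)
  have F3 : ContDiff ℝ 1 (fderiv ℝ g) := by
    have heq : fderiv ℝ g = fun p =>
        ((ContinuousLinearMap.fst ℝ ℝ (Fin n → ℝ)).smulRight (u (p.1, g p)))
          + (fderiv ℝ (fun l' => g (p.1, l')) p.2).comp
              (ContinuousLinearMap.snd ℝ ℝ (Fin n → ℝ)) := by
      funext p
      apply ContinuousLinearMap.ext
      intro q
      have hdec : q = (q.1 • ((1:ℝ), (0 : Fin n → ℝ))) + ((0:ℝ), q.2) := by
        ext <;> simp
      rw [hdec, map_add, _root_.map_smul, F2 p]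
      have h2 : fderiv ℝ g p ((0:ℝ), q.2) = fderiv ℝ (fun l' => g (p.1, l')) p.2 q.2 := by
        rw [F1 p]; rfl
      rw [h2]
      simp [ContinuousLinearMap.smulRight_apply]
    rw [heq]
    apply ContDiff.add
    · exact (ContinuousLinearMap.smulRightL ℝ (ℝ × (Fin n → ℝ)) (Fin n → ℝ)
        (ContinuousLinearMap.fst ℝ ℝ (Fin n → ℝ))).contDiff.comp hU
    · exact (((ContinuousLinearMap.compL ℝ (ℝ × (Fin n → ℝ)) (Fin n → ℝ) (Fin n → ℝ)).flip
        (ContinuousLinearMap.snd ℝ ℝ (Fin n → ℝ))).contDiff).comp hDg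
  have F4 : ContDiff ℝ 2 g := by
    rw [show ((2 : WithTop ℕ∞)) = 1 + 1 by norm_num, contDiff_succ_iff_fderiv]
    exact ⟨hgd, by simp, F3⟩
  intro t l i
  have hsymm : IsSymmSndFDerivAt ℝ g (t, l) :=
    F4.contDiffAt.isSymmSndFDerivAt (by norm_num)
  have hDgdiff : DifferentiableAt ℝ (fderiv ℝ g) (t, l) :=
    (F3.differentiable one_ne_zero) (t, l)
  set f'' := fderiv ℝ (fderiv ℝ g) (t, l) with hf''
  set gt := g (t, l) with hgt
  set B : (Fin n → ℝ) →L[ℝ] (Fin n → ℝ) := fderiv ℝ (fun x => u (t, x)) gt with hB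
  have hBu : ∀ y, B y = fderiv ℝ u (t, gt) ((0:ℝ), y) := by
    intro y
    have e : (fun x => u (t, x)) = u ∘ Prod.mk t := rfl
    rw [hB, e, ((hud (t, gt)).hasFDerivAt.comp gt (hasFDerivAt_prodMk_right t gt)).fderiv]
    rfl
  have hAw : ∀ w : Fin n → ℝ, HasDerivAt (fun s => fderiv ℝ (fun l' => g (s, l')) l w)
      (B (fderiv ℝ (fun l' => g (t, l')) l w)) t := by
    intro w
    have hcurve : HasDerivAt (fun s => ((s, l) : ℝ × (Fin n → ℝ))) (1, 0) t :=
      (hasDerivAt_id t).prodMk (hasDerivAt_const t l)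
    have h1 : HasDerivAt (fun s => fderiv ℝ g (s, l)) (f'' (1, 0)) t := by
      simpa [Function.comp_def] using hDgdiff.hasFDerivAt.comp_hasDerivAt t hcurve
    have h2 : HasDerivAt (fun s => fderiv ℝ g (s, l) ((0:ℝ), w)) (f'' (1, 0) ((0:ℝ), w)) t := by
      simpa [Function.comp_def] using (ContinuousLinearMap.apply ℝ (Fin n → ℝ)
        (((0:ℝ), w) : ℝ × (Fin n → ℝ))).hasFDerivAt.comp_hasDerivAt t h1
    have hsw : f'' (1, 0) ((0:ℝ), w) = f'' ((0:ℝ), w) (1, 0) := hsymm _ _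
    have h4 : HasFDerivAt (fun p : ℝ × (Fin n → ℝ) => fderiv ℝ g p (1, 0))
        ((ContinuousLinearMap.apply ℝ (Fin n → ℝ)
          (((1:ℝ), (0 : Fin n → ℝ)) : ℝ × (Fin n → ℝ))).comp f'') (t, l) :=
      (ContinuousLinearMap.apply ℝ (Fin n → ℝ)
        (((1:ℝ), (0 : Fin n → ℝ)) : ℝ × (Fin n → ℝ))).hasFDerivAt.comp (t, l)
        hDgdiff.hasFDerivAt
    have h5 : HasFDerivAt (fun p : ℝ × (Fin n → ℝ) => u (p.1, g p))
        ((fderiv ℝ u (t, gt)).comp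
          ((ContinuousLinearMap.fst ℝ ℝ (Fin n → ℝ)).prod (fderiv ℝ g (t, l)))) (t, l) :=
      (hud (t, gt)).hasFDerivAt.comp (t, l) (hasFDerivAt_fst.prodMk (hgd (t, l)).hasFDerivAt)
    have h3 : (fun p : ℝ × (Fin n → ℝ) => fderiv ℝ g p (1, 0))
        = fun p : ℝ × (Fin n → ℝ) => u (p.1, g p) := funext F2
    rw [h3] at h4
    have h7 := h4.unique h5
    have h8 : f'' ((0:ℝ), w) (1, 0)
        = fderiv ℝ u (t, gt) ((0:ℝ), fderiv ℝ g (t, l) ((0:ℝ), w)) := by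
      have := congrArg (fun T : (ℝ × (Fin n → ℝ)) →L[ℝ] (Fin n → ℝ) => T ((0:ℝ), w)) h7
      simpa using this
    have hAt : ∀ s, fderiv ℝ (fun l' => g (s, l')) l w = fderiv ℝ g (s, l) ((0:ℝ), w) := by
      intro s; rw [F1 (s, l)]; rfl
    have hfun : (fun s => fderiv ℝ (fun l' => g (s, l')) l w)
        = fun s => fderiv ℝ g (s, l) ((0:ℝ), w) := funext hAt
    rw [hfun]
    have hval : B (fderiv ℝ (fun l' => g (t, l')) l w) = f'' (1, 0) ((0:ℝ), w) := by
      rw [hBu, hAt t, hsw, h8]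
    rw [hval]
    exact h2
  have hApi : ∀ (w : Fin n → ℝ) (j : Fin n),
      HasDerivAt (fun s => fderiv ℝ (fun l' => g (s, l')) l w j)
        (B (fderiv ℝ (fun l' => g (t, l')) l w) j) t :=
    fun w j => hasDerivAt_pi.1 (hAw w) j
  set Mt : Matrix (Fin n) (Fin n) ℝ :=
    Matrix.of fun p q => fderiv ℝ (fun l' => g (t, l')) l (Pi.single q 1) p with hMt
  set Bm : Matrix (Fin n) (Fin n) ℝ := Matrix.of fun p q => B (Pi.single q 1) p with hBm
  have hdet : ∀ s : ℝ, (fderiv ℝ (fun l' => g (s, l')) l).det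
      = Matrix.det (Matrix.of fun p q => fderiv ℝ (fun l' => g (s, l')) l (Pi.single q 1) p) := by
    intro s
    rw [show (fderiv ℝ (fun l' => g (s, l')) l).det
        = LinearMap.det ((fderiv ℝ (fun l' => g (s, l')) l : (Fin n → ℝ) →ₗ[ℝ] (Fin n → ℝ))) from rfl,
      ← LinearMap.det_toMatrix']
    congr 1
  have hentry : ∀ p q : Fin n, HasDerivAt
      (fun s => fderiv ℝ (fun l' => g (s, l')) l (Pi.single q 1) p) ((Bm * Mt) p q) t := by
    intro p q
    have h := hApi (Pi.single q 1) p
    have he : B (fderiv ℝ (fun l' => g (t, l')) l (Pi.single q 1)) p = (Bm * Mt) p q := by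
      rw [clm_apply_expand B (fderiv ℝ (fun l' => g (t, l')) l (Pi.single q 1)) p,
        Matrix.mul_apply]
      apply Finset.sum_congr rfl
      intro m _
      simp only [hMt, hBm, Matrix.of_apply]
      ring
    rwa [he] at h
  have hdetDeriv : HasDerivAt (fun s => (fderiv ℝ (fun l' => g (s, l')) l).det)
      (Bm.trace * Mt.det) t := by
    have h := my_hasDerivAt_det n
      (fun s => Matrix.of fun p q => fderiv ℝ (fun l' => g (s, l')) l (Pi.single q 1) p)
      (Bm * Mt) t (fun p q => hentry p q)
    rw [← my_sum_det_updateColumn n Mt Bm]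
    have hfe : (fun s => (fderiv ℝ (fun l' => g (s, l')) l).det)
        = fun s => Matrix.det (Matrix.of fun p q =>
            fderiv ℝ (fun l' => g (s, l')) l (Pi.single q 1) p) := funext hdet
    rw [hfe]
    exact h
  have hgcurve : HasDerivAt (fun s => g (s, l)) (u (t, gt)) t := by
    have h1 : HasDerivAt (fun s => g (s, l)) (fderiv ℝ g (t, l) (1, 0)) t := by
      simpa [Function.comp_def] using (hgd (t, l)).hasFDerivAt.comp_hasDerivAt t
        ((hasDerivAt_id t).prodMk (hasDerivAt_const t l))
    rwa [F2 (t, l)] at h1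
  have hvj : ∀ j : Fin n, HasDerivAt (fun s => v (g (s, l)) j)
      (fderiv ℝ v gt (u (t, gt)) j) t := by
    intro j
    have h1 : HasDerivAt (fun s => v (g (s, l))) (fderiv ℝ v gt (u (t, gt))) t := by
      simpa [Function.comp_def] using (hvd gt).hasFDerivAt.comp_hasDerivAt t hgcurve
    exact hasDerivAt_pi.1 h1 j
  have hS : HasDerivAt
      (fun s => ∑ j, fderiv ℝ (fun l' => g (s, l')) l (Pi.single i 1) j * v (g (s, l)) j)
      (∑ j, (B (fderiv ℝ (fun l' => g (t, l')) l (Pi.single i 1)) j * v gt j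
        + fderiv ℝ (fun l' => g (t, l')) l (Pi.single i 1) j * fderiv ℝ v gt (u (t, gt)) j)) t :=
    HasDerivAt.fun_sum fun j _ => (hApi (Pi.single i 1) j).fun_mul (hvj j)
  have hLHS := (hdetDeriv.fun_mul hS).deriv
  rw [hLHS]
  have husp : DifferentiableAt ℝ (fun x => u (t, x)) gt :=
    ((hud (t, gt)).hasFDerivAt.comp gt (hasFDerivAt_prodMk_right t gt)).differentiableAt
  have hT2 : ∀ (k : Fin n) (w : Fin n → ℝ), fderiv ℝ (fun x => u (t, x) k) gt w = B w k := by
    intro k w; rw [hB]; exact fderiv_comp_proj husp k w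
  have hukdiff : ∀ k : Fin n, DifferentiableAt ℝ (fun x => u (t, x) k) gt := fun k =>
    ((ContinuousLinearMap.proj (R := ℝ) (φ := fun _ : Fin n => ℝ) k).hasFDerivAt.comp gt
      husp.hasFDerivAt).differentiableAt
  have hvjdiff : ∀ j : Fin n, DifferentiableAt ℝ (fun x => v x j) gt := fun j =>
    ((ContinuousLinearMap.proj (R := ℝ) (φ := fun _ : Fin n => ℝ) j).hasFDerivAt.comp gt
      (hvd gt).hasFDerivAt).differentiableAt
  have hvproj : ∀ (j : Fin n) (w : Fin n → ℝ), fderiv ℝ (fun x => v x j) gt w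
      = fderiv ℝ v gt w j := fun j w => fderiv_comp_proj (hvd gt) j w
  have hT1 : ∀ j k : Fin n, fderiv ℝ (fun x => u (t, x) k * v x j) gt (Pi.single k 1)
      = u (t, gt) k * fderiv ℝ v gt (Pi.single k 1) j + v gt j * B (Pi.single k 1) k := by
    intro j k
    rw [fderiv_fun_mul (hukdiff k) (hvjdiff j)]
    simp only [ContinuousLinearMap.add_apply, ContinuousLinearMap.smul_apply, smul_eq_mul]
    rw [hvproj j, hT2 k]
  have htrace : Bm.trace = ∑ k, B (Pi.single k 1) k := by
    simp [hBm, Matrix.trace, Matrix.diag]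
  have hdet_t : Mt.det = (fderiv ℝ (fun l' => g (t, l')) l).det := by
    rw [hMt, ← hdet t]
  have e1 : ∀ j : Fin n, fderiv ℝ v gt (u (t, gt)) j
      = ∑ k, u (t, gt) k * fderiv ℝ v gt (Pi.single k 1) j :=
    fun j => clm_apply_expand _ _ _
  have e2 : ∀ j : Fin n, B (fderiv ℝ (fun l' => g (t, l')) l (Pi.single i 1)) j
      = ∑ m, fderiv ℝ (fun l' => g (t, l')) l (Pi.single i 1) m * B (Pi.single m 1) j :=
    fun j => clm_apply_expand _ _ _
  simp only [← hgt, hT1, hT2, htrace, hdet_t, e1, e2]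
  exact final_algebra (fun j => fderiv ℝ (fun l' => g (t, l')) l (Pi.single i 1) j)
    (fun j => v gt j) (fun k => u (t, gt) k)
    (fun m j => B (Pi.single m 1) j) (fun k j => fderiv ℝ v gt (Pi.single k 1) j)
    (fderiv ℝ (fun l' => g (t, l')) l).det
end
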